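/- Let V be a complex Hilbert space, a : V × V → ℂ a bounded sesquilinear form with bound C_a that satisfies the inf-sup condition with constant α > 0 (for every u ∈ V, sup over v ≠ 0 of Re a(u,v)/‖v‖ ≥ α‖u‖), and let V₀ ⊆ V be a closed subspace on which a is coercive with constant c > 0. Let Y := {y ∈ V : a(w, y) = 0 for all w ∈ V₀}, let g : V → ℂ be a bounded conjugate-linear functional, let φ ∈ V satisfy a(φ, v) = g(v) for all v ∈ V, and let φ^loc ∈ V₀ satisfy a(φ^loc, v) = g(v) for all v ∈ V₀. Then, with ‖g‖_{Y'} := sup over y ∈ Y, y ≠ 0, of |g(y)|/‖y‖, the localization error satisfies the two-sided bound α·‖φ − φ^loc‖ ≤ (1 + C_a/c)·‖g‖_{Y'} and ‖g‖_{Y'} ≤ C_a·‖φ − φ^loc‖. -/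

import Mathlib

open InnerProductSpace in
/-- Lax–Milgram-type solvability in the second argument on the closed subspace `V₀`. -/
lemma aux_surj {V : Type*} [NormedAddCommGroup V] [InnerProductSpace ℂ V] [CompleteSpace V]
    (a : V →ₗ[ℂ] V →ₗ⋆[ℂ] ℂ) (Ca : ℝ)
    (hbound : ∀ u w : V, ‖a u w‖ ≤ Ca * ‖u‖ * ‖w‖)
    (V₀ : Submodule ℂ V) (hV₀ : IsClosed (V₀ : Set V))
    (c : ℝ) (hc : 0 < c) (hcoerc : ∀ w ∈ V₀, c * ‖w‖ ^ 2 ≤ (a w w).re)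
    (w : V) : ∃ w₀ ∈ V₀, ∀ v ∈ V₀, a v w₀ = a v w := by
  haveI : CompleteSpace V₀ := hV₀.completeSpace_coe
  -- the sesquilinear form restricted to V₀, conjugate-linear in the 1st slot
  let B₀ : ↥V₀ →ₗ⋆[ℂ] ↥V₀ →ₗ[ℂ] ℂ :=
    { toFun := fun x =>
        { toFun := fun v => a v x
          map_add' := fun v₁ v₂ => by simp
          map_smul' := fun m v => by simp }
      map_add' := fun x y => by ext v; simp
      map_smul' := fun m x => by ext v; simp }
  have hB₀ : ∀ (x v : ↥V₀), ‖B₀ x v‖ ≤ Ca * ‖x‖ * ‖v‖ := by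
    intro x v
    calc ‖a (v : V) (x : V)‖ ≤ Ca * ‖(v : V)‖ * ‖(x : V)‖ := hbound _ _
      _ = Ca * ‖x‖ * ‖v‖ := by rw [Submodule.norm_coe, Submodule.norm_coe]; ring
  let B : ↥V₀ →L⋆[ℂ] ↥V₀ →L[ℂ] ℂ := LinearMap.mkContinuous₂ B₀ Ca hB₀
  have hBapp : ∀ (x v : ↥V₀), B x v = a v x := fun x v => rfl
  let S : ↥V₀ →L[ℂ] ↥V₀ := continuousLinearMapOfBilin B
  have hS : ∀ (x v : ↥V₀), ⟪S x, v⟫_ℂ = a (v : V) (x : V) := fun x v =>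
    continuousLinearMapOfBilin_apply B x v
  have hlow : ∀ x : ↥V₀, c * ‖x‖ ≤ ‖S x‖ := by
    intro x
    rcases eq_or_ne x 0 with rfl | hx
    · simp
    have hxpos : (0:ℝ) < ‖x‖ := norm_pos_iff.2 hx
    have h1 : c * ‖x‖ * ‖x‖ ≤ ‖S x‖ * ‖x‖ := by
      calc c * ‖x‖ * ‖x‖ = c * ‖(x : V)‖ ^ 2 := by rw [Submodule.norm_coe]; ring
        _ ≤ (a (x : V) (x : V)).re := hcoerc _ x.2
        _ = (⟪S x, x⟫_ℂ).re := by rw [hS]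
        _ ≤ ‖⟪S x, x⟫_ℂ‖ := Complex.re_le_norm _
        _ ≤ ‖S x‖ * ‖x‖ := norm_inner_le_norm _ _
    exact le_of_mul_le_mul_right h1 hxpos
  have hanti : AntilipschitzWith (c⁻¹.toNNReal) S := by
    refine ContinuousLinearMap.antilipschitz_of_bound S fun x => ?_
    rw [Real.coe_toNNReal _ (le_of_lt (inv_pos.2 hc))]
    rw [← mul_le_mul_iff_right₀ hc, ← mul_assoc, mul_inv_cancel₀ hc.ne', one_mul]
    exact hlow x
  have hclosed : IsClosed (LinearMap.range (S : ↥V₀ →ₗ[ℂ] ↥V₀) : Set ↥V₀) :=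
    hanti.isClosed_range S.uniformContinuous
  haveI : CompleteSpace (LinearMap.range (S : ↥V₀ →ₗ[ℂ] ↥V₀)) := hclosed.completeSpace_coe
  have hrange : LinearMap.range (S : ↥V₀ →ₗ[ℂ] ↥V₀) = ⊤ := by
    rw [← Submodule.orthogonal_eq_bot_iff]
    rw [Submodule.eq_bot_iff]
    intro x hx
    have h0 : ⟪S x, x⟫_ℂ = 0 := hx (S x) ⟨x, rfl⟩
    have h1 : c * ‖(x : V)‖ ^ 2 ≤ 0 := by
      calc c * ‖(x : V)‖ ^ 2 ≤ (a (x : V) (x : V)).re := hcoerc _ x.2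
        _ = (⟪S x, x⟫_ℂ).re := by rw [hS]
        _ = 0 := by rw [h0]; simp
    have : ‖(x : V)‖ ^ 2 ≤ 0 := nonpos_of_mul_nonpos_right (by linarith) hc
    have : ‖(x : V)‖ = 0 := by nlinarith [norm_nonneg (x : V), sq_nonneg ‖(x : V)‖]
    exact Subtype.ext (norm_eq_zero.mp this)
  -- the right-hand-side functional
  let F₀ : ↥V₀ →ₗ[ℂ] ℂ :=
    { toFun := fun v => a v w
      map_add' := fun v₁ v₂ => by simp
      map_smul' := fun m v => by simp }
  let F : ↥V₀ →L[ℂ] ℂ := F₀.mkContinuous (Ca * ‖w‖) fun v => by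
    calc ‖a (v : V) w‖ ≤ Ca * ‖(v : V)‖ * ‖w‖ := hbound _ _
      _ = Ca * ‖w‖ * ‖v‖ := by rw [Submodule.norm_coe]; ring
  let z : ↥V₀ := (toDual ℂ ↥V₀).symm F
  have hz : ∀ v : ↥V₀, ⟪z, v⟫_ℂ = a (v : V) w := fun v => by
    simp only [z, toDual_symm_apply]; rfl
  obtain ⟨x, hxS⟩ : ∃ x : ↥V₀, S x = z := by
    have := LinearMap.range_eq_top.mp (by exact_mod_cast hrange)
    exact this z
  refine ⟨(x : V), x.2, fun v hv => ?_⟩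
  have := hS x ⟨v, hv⟩
  rw [hxS, hz ⟨v, hv⟩] at this
  exact this.symm

/-- Two-sided bound for the localization error: with
`‖g‖_{Y'} := sup_{y ∈ Y, y ≠ 0} |g(y)|/‖y‖`, one has
`α‖φ − φ^loc‖ ≤ (1 + C_a/c)‖g‖_{Y'}` and `‖g‖_{Y'} ≤ C_a‖φ − φ^loc‖`. -/
theorem stmt_4 {V : Type*} [NormedAddCommGroup V] [InnerProductSpace ℂ V] [CompleteSpace V]
    (a : V →ₗ[ℂ] V →ₗ⋆[ℂ] ℂ) (Ca : ℝ) (hCa : 0 < Ca)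
    (hbound : ∀ u w : V, ‖a u w‖ ≤ Ca * ‖u‖ * ‖w‖)
    (α : ℝ) (hα : 0 < α)
    (hinfsup : ∀ u : V, α * ‖u‖ ≤ ⨆ w : {w : V // w ≠ 0}, (a u w.1).re / ‖w.1‖)
    (V₀ : Submodule ℂ V) (hV₀ : IsClosed (V₀ : Set V))
    (c : ℝ) (hc : 0 < c) (hcoerc : ∀ w ∈ V₀, c * ‖w‖ ^ 2 ≤ (a w w).re)
    (g : V →ₗ⋆[ℂ] ℂ) (Cg : ℝ) (hg : ∀ w : V, ‖g w‖ ≤ Cg * ‖w‖)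
    (φ : V) (hφ : ∀ w : V, a φ w = g w)
    (φloc : V) (hφloc : φloc ∈ V₀) (hφloceq : ∀ w ∈ V₀, a φloc w = g w) :
    α * ‖φ - φloc‖ ≤
        (1 + Ca / c) * (⨆ y : {y : V // (∀ w ∈ V₀, a w y = 0) ∧ y ≠ 0}, ‖g y.1‖ / ‖y.1‖) ∧
      (⨆ y : {y : V // (∀ w ∈ V₀, a w y = 0) ∧ y ≠ 0}, ‖g y.1‖ / ‖y.1‖) ≤
        Ca * ‖φ - φloc‖ := by
  set e : V := φ - φloc with he
  set T : ℝ := ⨆ y : {y : V // (∀ w ∈ V₀, a w y = 0) ∧ y ≠ 0}, ‖g y.1‖ / ‖y.1‖ with hT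
  -- `g y = a e y` for `y ∈ Y`
  have key : ∀ y : V, (∀ w ∈ V₀, a w y = 0) → g y = a e y := by
    intro y hy
    have h1 : a φ y = g y := hφ y
    have h2 : a φloc y = 0 := hy φloc hφloc
    have : a e y = a φ y - a φloc y := by
      simp [he, map_sub]
    rw [this, h1, h2, sub_zero]
  have hbnd : ∀ y : {y : V // (∀ w ∈ V₀, a w y = 0) ∧ y ≠ 0},
      ‖g y.1‖ / ‖y.1‖ ≤ Ca * ‖e‖ := by
    rintro ⟨y, hy, hy0⟩
    have hypos : (0:ℝ) < ‖y‖ := norm_pos_iff.2 hy0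
    rw [div_le_iff₀ hypos]
    calc ‖g y‖ = ‖a e y‖ := by rw [key y hy]
      _ ≤ Ca * ‖e‖ * ‖y‖ := hbound _ _
  have hCae : (0:ℝ) ≤ Ca * ‖e‖ := mul_nonneg hCa.le (norm_nonneg _)
  have hTle : T ≤ Ca * ‖e‖ := Real.iSup_le hbnd hCae
  have hT0 : 0 ≤ T := Real.iSup_nonneg fun y => div_nonneg (norm_nonneg _) (norm_nonneg _)
  have hbdd : BddAbove (Set.range fun y : {y : V // (∀ w ∈ V₀, a w y = 0) ∧ y ≠ 0} =>
      ‖g y.1‖ / ‖y.1‖) := by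
    refine ⟨Ca * ‖e‖, ?_⟩
    rintro x ⟨y, rfl⟩
    exact hbnd y
  have hgT : ∀ y : V, (∀ w ∈ V₀, a w y = 0) → ‖g y‖ ≤ T * ‖y‖ := by
    intro y hy
    rcases eq_or_ne y 0 with rfl | hy0
    · simp
    have hypos : (0:ℝ) < ‖y‖ := norm_pos_iff.2 hy0
    have := le_ciSup hbdd (⟨y, hy, hy0⟩ : {y : V // (∀ w ∈ V₀, a w y = 0) ∧ y ≠ 0})
    rw [div_le_iff₀ hypos] at this
    exact this
  constructor
  · -- first inequality
    have h1 : α * ‖e‖ ≤ ⨆ w : {w : V // w ≠ 0}, (a e w.1).re / ‖w.1‖ := hinfsup e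
    refine h1.trans (Real.iSup_le ?_ ?_)
    · rintro ⟨w, hw0⟩
      have hwpos : (0:ℝ) < ‖w‖ := norm_pos_iff.2 hw0
      obtain ⟨w₀, hw₀mem, hw₀⟩ := aux_surj a Ca hbound V₀ hV₀ c hc hcoerc w
      set y : V := w - w₀ with hy
      have hyY : ∀ v ∈ V₀, a v y = 0 := by
        intro v hv
        simp [hy, map_sub, hw₀ v hv]
      -- bound on w₀
      have hw₀bound : ‖w₀‖ ≤ Ca / c * ‖w‖ := by
        rcases eq_or_ne w₀ 0 with h | h
        · simp [h]; positivity
        have hpos : (0:ℝ) < ‖w₀‖ := norm_pos_iff.2 h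
        have h2 : c * ‖w₀‖ ^ 2 ≤ Ca * ‖w₀‖ * ‖w‖ := by
          calc c * ‖w₀‖ ^ 2 ≤ (a w₀ w₀).re := hcoerc _ hw₀mem
            _ = (a w₀ w).re := by rw [hw₀ w₀ hw₀mem]
            _ ≤ ‖a w₀ w‖ := Complex.re_le_norm _
            _ ≤ Ca * ‖w₀‖ * ‖w‖ := hbound _ _
        rw [div_mul_eq_mul_div, le_div_iff₀ hc]
        nlinarith
      -- a e w = g y
      have haew : a e w = g y := by
        have h3 : a e w₀ = 0 := by
          have := hφ w₀
          have h4 := hφloceq w₀ hw₀mem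
          simp [he, map_sub, this, h4]
        have h5 : a e y = g y := (key y hyY).symm
        have : a e w = a e w₀ + a e y := by
          have : w = w₀ + y := by simp [hy]
          rw [this, map_add]
        rw [this, h3, h5, zero_add]
      have hybound : ‖y‖ ≤ (1 + Ca / c) * ‖w‖ := by
        calc ‖y‖ ≤ ‖w‖ + ‖w₀‖ := norm_sub_le _ _
          _ ≤ ‖w‖ + Ca / c * ‖w‖ := by linarith
          _ = (1 + Ca / c) * ‖w‖ := by ring
      rw [div_le_iff₀ hwpos]
      calc (a e w).re ≤ ‖a e w‖ := Complex.re_le_norm _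
        _ = ‖g y‖ := by rw [haew]
        _ ≤ T * ‖y‖ := hgT y hyY
        _ ≤ T * ((1 + Ca / c) * ‖w‖) := by
            exact mul_le_mul_of_nonneg_left hybound hT0
        _ = (1 + Ca / c) * T * ‖w‖ := by ring
    · positivity
  · exact hTle
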